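/- Let n ≥ 1, let A be an abelian group, and let f : 𝒢_n → A be an edge reconstruction invariant, i.e. a function satisfying f([G]) = f([G']) whenever ED(G) = ED(G'). Then there is a unique function f̂ from the image ι_n(𝒢_n) ⊆ K₀(Γ_{n,n−1}) to A such that f̂(ι_n[G]) = f([G]) for every [G] ∈ 𝒢_n; that is, f factors uniquely through ι_n. -/

import Mathlib

open SimpleGraph

/-- A finite simple graph, packaged with its (finite) vertex type. -/
structure FGraph : Type 1 where
  V : Type
  [finV : Finite V]
  graph : SimpleGraph V

attribute [instance] FGraph.finV

namespace FGraph

/-- Two finite graphs are isomorphic if there is a graph isomorphism between them. -/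
def IsIsoTo (G H : FGraph) : Prop := Nonempty (G.graph ≃g H.graph)

instance setoid : Setoid FGraph where
  r := IsIsoTo
  iseqv := ⟨fun G => ⟨RelIso.refl G.graph.Adj⟩, fun ⟨e⟩ => ⟨e.symm⟩, fun ⟨e⟩ ⟨f⟩ => ⟨e.trans f⟩⟩

end FGraph

/-- Isomorphism classes of finite simple graphs. -/
def GraphClass : Type 1 := Quotient FGraph.setoid

namespace FGraph

/-- The isomorphism class of a finite graph. -/
def cls (G : FGraph) : GraphClass := Quotient.mk _ G

/-- The number of edges of a finite graph. -/
noncomputable def edgeCount (G : FGraph) : ℕ := G.graph.edgeSet.ncard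

/-- The edge-deleted subgraph `G - e`: same vertices, with the edge `e` removed. -/
def deleteEdge (G : FGraph) (e : Sym2 G.V) : FGraph :=
  { V := G.V, graph := G.graph.deleteEdges {e} }

/-- The multiset of edge-deleted subgraphs of `G` (one for each edge), as graphs. -/
noncomputable def deckGraphs (G : FGraph) : Multiset FGraph :=
  (G.graph.edgeSet.toFinite.toFinset.val).map fun e => G.deleteEdge e

/-- The edge deck of `G` : the multiset of isomorphism classes of the edge-deleted
subgraphs `G - e`, one for each edge `e` of `G`. -/
noncomputable def edgeDeck (G : FGraph) : Multiset GraphClass :=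
  G.deckGraphs.map cls

lemma exists_of_mem_edgeDeck {G : FGraph} {c : GraphClass} (hc : c ∈ G.edgeDeck) :
    ∃ H : FGraph, H.cls = c ∧ H.edgeCount = G.edgeCount - 1 := by
  classical
  rw [edgeDeck, deckGraphs, Multiset.map_map] at hc
  obtain ⟨e, he, rfl⟩ := Multiset.mem_map.mp hc
  refine ⟨G.deleteEdge e, rfl, ?_⟩
  have he' : e ∈ G.graph.edgeSet := by
    simpa using (Set.Finite.mem_toFinset _).mp he
  simp only [edgeCount, deleteEdge, SimpleGraph.edgeSet_deleteEdges]
  exact Set.ncard_sdiff_singleton_of_mem he'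

/-- The disjoint union of two finite graphs. -/
def disjUnion (G H : FGraph) : FGraph :=
  { V := G.V ⊕ H.V, graph := G.graph ⊕g H.graph }

end FGraph

/-- `𝒢 n` is the set of isomorphism classes of graphs with exactly `n` edges. -/
def GClass (n : ℕ) : Type 1 :=
  {c : GraphClass // ∃ G : FGraph, G.cls = c ∧ G.edgeCount = n}

/-- Given a graph `G` with `n` edges, sum a function `f` over the edge deck of `G`,
regarded as a multiset of isomorphism classes of graphs with `n - 1` edges. -/
noncomputable def FGraph.edgeDeckSum (n : ℕ) (G : FGraph) (hG : G.edgeCount = n)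
    {β : Type*} [AddCommMonoid β] (f : GClass (n - 1) → β) : β :=
  (G.edgeDeck.attach.map fun c => f ⟨c.1, by
    obtain ⟨H, h1, h2⟩ := FGraph.exists_of_mem_edgeDeck c.2
    exact ⟨H, h1, by rw [h2, hG]⟩⟩).sum

/-- The subgroup of relations defining `K₀(Γ_{n,n-1})`: for every graph `G` with `n`
edges, `[G] = Σ_{C ∈ ED(G)} [C]`. -/
def K0Rel (n : ℕ) : AddSubgroup (FreeAbelianGroup (GClass n ⊕ GClass (n - 1))) :=
  AddSubgroup.closure
    {x | ∃ (G : FGraph) (hG : G.edgeCount = n),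
      x = FreeAbelianGroup.of (Sum.inl ⟨G.cls, G, rfl, hG⟩)
        - G.edgeDeckSum n hG (fun c => FreeAbelianGroup.of (Sum.inr c))}

/-- `K₀(Γ_{n,n-1})`: the free abelian group on `𝒢 n ⊔ 𝒢 (n-1)` modulo the edge-deck
relations. -/
abbrev K0Gamma (n : ℕ) : Type 1 :=
  FreeAbelianGroup (GClass n ⊕ GClass (n - 1)) ⧸ K0Rel n

/-- The map `ι_n : 𝒢 n → K₀(Γ_{n,n-1})` sending a class to its image in the quotient. -/
noncomputable def iotaCls (n : ℕ) (c : GClass n) : K0Gamma n :=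
  QuotientAddGroup.mk (FreeAbelianGroup.of (Sum.inl c))

/-- Generalized edge reconstruction fails for `n`-edge graphs with `k` pieces: there are
two distinct multisets of `k` isomorphism classes of graphs with exactly `n` edges whose
total edge decks agree. -/
def GERFails (n k : ℕ) : Prop :=
  ∃ M M' : Multiset FGraph,
    Multiset.card M = k ∧ Multiset.card M' = k ∧
    (∀ G ∈ M, G.edgeCount = n) ∧ (∀ G ∈ M', G.edgeCount = n) ∧
    M.map FGraph.cls ≠ M'.map FGraph.cls ∧
    (M.map FGraph.edgeDeck).sum = (M'.map FGraph.edgeDeck).sum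

/-- `kmin n` is the least `k ≥ 1` for which generalized edge reconstruction fails for
`n`-edge graphs. -/
noncomputable def kmin (n : ℕ) : ℕ := sInf {k | 1 ≤ k ∧ GERFails n k}

/-- The graph `2K₂`: four vertices, two disjoint edges. -/
def twoK2 : FGraph :=
  { V := Fin 4, graph := SimpleGraph.fromEdgeSet {s(0, 1), s(2, 3)} }

/-- The graph `P₃ ⊔ K₁`: a two-edge path together with an isolated vertex. -/
def p3K1 : FGraph :=
  { V := Fin 4, graph := SimpleGraph.fromEdgeSet {s(0, 1), s(1, 2)} }

/-- The graph `K₃ ⊔ K₁`: a triangle together with an isolated vertex. -/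
def k3K1 : FGraph :=
  { V := Fin 4, graph := SimpleGraph.fromEdgeSet {s(0, 1), s(1, 2), s(0, 2)} }

/-- The star `K_{1,3}`: a center vertex adjacent to three leaves. -/
def k13 : FGraph :=
  { V := Fin 4, graph := SimpleGraph.fromEdgeSet {s(0, 1), s(0, 2), s(0, 3)} }

-- iso of deleted graphs
def isoDeleteEdge {α β : Type} {G : SimpleGraph α} {H : SimpleGraph β} (e : G ≃g H)
    (a : Sym2 α) : (G.deleteEdges {a}) ≃g (H.deleteEdges {Sym2.map e a}) where
  toEquiv := e.toEquiv
  map_rel_iff' := by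
    intro v w
    simp only [deleteEdges_adj, Set.mem_singleton_iff, RelIso.coe_fn_toEquiv]
    have h2 : Sym2.map (⇑e) s(v, w) = Sym2.map (⇑e) a ↔ s(v, w) = a :=
      (Sym2.map.injective e.injective).eq_iff
    rw [← Sym2.map_pair_eq, h2]
    exact and_congr_left fun _ => e.map_adj_iff

lemma cls_deleteEdge_map {G G' : FGraph} (e : G.graph ≃g G'.graph) (a : Sym2 G.V) :
    (G.deleteEdge a).cls = (G'.deleteEdge (Sym2.map e a)).cls :=
  Quotient.sound ⟨isoDeleteEdge e a⟩

lemma edgeDeck_invariant {G G' : FGraph} (h : G.IsIsoTo G') : G.edgeDeck = G'.edgeDeck := by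
  classical
  obtain ⟨e⟩ := h
  have hinj : Function.Injective (Sym2.map ⇑e) := Sym2.map.injective e.injective
  have hset : G'.graph.edgeSet.toFinite.toFinset
      = G.graph.edgeSet.toFinite.toFinset.map ⟨Sym2.map ⇑e, hinj⟩ := by
    ext x
    simp only [Set.Finite.mem_toFinset, Finset.mem_map, Function.Embedding.coeFn_mk,
      Set.Finite.mem_toFinset]
    constructor
    · intro hx
      refine ⟨Sym2.map ⇑e.symm x, ?_, ?_⟩
      · exact SimpleGraph.Hom.map_mem_edgeSet e.symm.toHom hx
      · simp [Sym2.map_map, Function.comp]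
    · rintro ⟨y, hy, rfl⟩
      exact SimpleGraph.Hom.map_mem_edgeSet e.toHom hy
  unfold FGraph.edgeDeck FGraph.deckGraphs
  rw [Multiset.map_map, Multiset.map_map, hset, Finset.map_val, Multiset.map_map]
  apply Multiset.map_congr rfl
  intro a _
  exact cls_deleteEdge_map e a

noncomputable def deckCls : GraphClass → Multiset GraphClass :=
  Quotient.lift FGraph.edgeDeck fun _ _ h => edgeDeck_invariant h

lemma deckCls_cls (G : FGraph) : deckCls G.cls = G.edgeDeck := rfl

noncomputable def msElt (M : Multiset GraphClass) : GraphClass →₀ ℤ :=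
  (M.map fun d => Finsupp.single d 1).sum

lemma msElt_apply (M : Multiset GraphClass) (d : GraphClass) [DecidableEq GraphClass] :
    msElt M d = M.count d := by
  induction M using Multiset.induction with
  | empty => simp [msElt]
  | cons a M ih =>
      simp only [msElt, Multiset.map_cons, Multiset.sum_cons, Finsupp.add_apply,
        Multiset.count_cons] at *
      rw [ih, Finsupp.single_apply]
      push_cast
      rw [add_comm]
      congr 1
      by_cases h : d = a <;> simp [h, eq_comm]

lemma msElt_injective : Function.Injective msElt := by
  classical
  intro M M' h
  ext d
  have := congrArg (fun g => g d) h
  simpa [msElt_apply] using this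

noncomputable def Phi (n : ℕ) : FreeAbelianGroup (GClass n ⊕ GClass (n - 1)) →+ (GraphClass →₀ ℤ) :=
  FreeAbelianGroup.lift (fun x => match x with
    | Sum.inl c => msElt (deckCls c.1)
    | Sum.inr d => Finsupp.single d.1 1)

lemma K0Rel_le_ker (n : ℕ) : K0Rel n ≤ (Phi n).ker := by
  rw [K0Rel, AddSubgroup.closure_le]
  rintro x ⟨G, hG, rfl⟩
  simp only [SetLike.mem_coe, AddMonoidHom.mem_ker, map_sub, sub_eq_zero]
  have h1 : Phi n (FreeAbelianGroup.of (Sum.inl ⟨G.cls, G, rfl, hG⟩)) = msElt G.edgeDeck := by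
    simp [Phi, FreeAbelianGroup.lift_apply_of, deckCls_cls]
  have h2 : Phi n (G.edgeDeckSum n hG (fun c => FreeAbelianGroup.of (Sum.inr c)))
      = msElt G.edgeDeck := by
    rw [FGraph.edgeDeckSum, map_multiset_sum, Multiset.map_map]
    have : (G.edgeDeck.attach.map fun c =>
        (Phi n ∘ fun c => FreeAbelianGroup.of (Sum.inr (α := GClass n) (⟨c.1, by
          obtain ⟨H, h1, h2⟩ := FGraph.exists_of_mem_edgeDeck c.2
          exact ⟨H, h1, by rw [h2, hG]⟩⟩ : GClass (n-1)))) c)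
        = G.edgeDeck.attach.map fun c => Finsupp.single c.1 (1 : ℤ) := by
      apply Multiset.map_congr rfl
      intro a _
      simp [Phi, FreeAbelianGroup.lift_apply_of]
    rw [this]
    conv_rhs => rw [msElt, ← Multiset.attach_map_val G.edgeDeck, Multiset.map_map]
    rfl
  rw [h1, h2]

lemma iota_eq_imp_deck_eq (n : ℕ) (c c' : GClass n) (h : iotaCls n c = iotaCls n c') :
    deckCls c.1 = deckCls c'.1 := by
  rw [iotaCls, iotaCls, QuotientAddGroup.eq] at h
  have := K0Rel_le_ker n h
  rw [AddMonoidHom.mem_ker, map_add, map_neg, neg_add_eq_zero] at this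
  have hm : msElt (deckCls c.1) = msElt (deckCls c'.1) := by
    simpa [Phi, FreeAbelianGroup.lift_apply_of] using this
  exact msElt_injective hm


/-- any edge reconstruction invariant `f : 𝒢_n → A` valued in an abelian
group factors uniquely through `ι_n : 𝒢_n → K₀(Γ_{n,n-1})`, via a unique function on
the image `ι_n(𝒢_n)`. -/
theorem reconstruction_invariant_factors (n : ℕ) (hn : 1 ≤ n)
    (A : Type*) [AddCommGroup A] (f : GClass n → A)
    (hf : ∀ (G G' : FGraph) (hG : G.edgeCount = n) (hG' : G'.edgeCount = n),
      G.edgeDeck = G'.edgeDeck → f ⟨G.cls, G, rfl, hG⟩ = f ⟨G'.cls, G', rfl, hG'⟩) :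
    ∃! fhat : Set.range (iotaCls n) → A,
      ∀ c : GClass n, fhat ⟨iotaCls n c, c, rfl⟩ = f c := by
  have key : ∀ c c' : GClass n, iotaCls n c = iotaCls n c' → f c = f c' := by
    intro c c' h
    have hd := iota_eq_imp_deck_eq n c c' h
    obtain ⟨G, hG1, hG2⟩ := c.2
    obtain ⟨G', hG1', hG2'⟩ := c'.2
    have hc : c = ⟨G.cls, G, rfl, hG2⟩ := Subtype.ext hG1.symm
    have hc' : c' = ⟨G'.cls, G', rfl, hG2'⟩ := Subtype.ext hG1'.symm
    rw [hc, hc']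
    refine hf G G' hG2 hG2' ?_
    have : G.edgeDeck = deckCls c.1 := by rw [hc]; rfl
    have h2 : G'.edgeDeck = deckCls c'.1 := by rw [hc']; rfl
    rw [this, h2, hd]
  refine ⟨fun x => f x.2.choose, ?_, ?_⟩
  · intro c
    exact key _ _ (Exists.choose_spec (⟨c, rfl⟩ : ∃ c', iotaCls n c' = iotaCls n c))
  · intro g hg
    funext x
    obtain ⟨c, hc⟩ := x.2
    have h1 : f (x.2.choose) = f c := key _ _ (by rw [x.2.choose_spec, ← hc])
    have h2 : g x = f c := by
      rw [← hg c]
      congr 1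
      exact Subtype.ext hc.symm
    exact h2.trans h1.symm
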